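/- Let A = diag(λ₁,...,λₙ) with 1 = λ₁ ≤ ... ≤ λₙ, and let g ∈ ℝⁿ with components g_i. Fix μ ∈ {1,...,n−1} and ε > 0. If Σ_{i=1}^{μ} g_i² ≤ ε and g_{μ+1}² ≥ 2ε, then the Rayleigh quotient satisfies (gᵀAg)/(gᵀg) ≥ (2/3)·λ_{μ+1}. -/
import Mathlib


open Matrix

/-- If the first μ squared gradient components sum to at most ε and the
(μ+1)st squared component is at least 2ε, then the Rayleigh quotient of the
diagonal matrix A = diag(λ₁,...,λₙ), 1 = λ₁ ≤ ... ≤ λₙ, at g is at least (2/3)λ_{μ+1}. -/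
theorem rayleigh_lower_bound {n : ℕ} (lam : Fin n → ℝ)
    (hmono : Monotone lam) (hn : 0 < n) (h1 : lam ⟨0, hn⟩ = 1)
    (g : Fin n → ℝ) (μ : ℕ) (hμ1 : 1 ≤ μ) (hμn : μ < n) (ε : ℝ) (hε : 0 < ε)
    (hsum : ∑ i ∈ Finset.univ.filter (fun i : Fin n => (i : ℕ) < μ), g i ^ 2 ≤ ε)
    (hbig : g ⟨μ, hμn⟩ ^ 2 ≥ 2 * ε) :
    (g ⬝ᵥ (Matrix.diagonal lam).mulVec g) / (g ⬝ᵥ g) ≥ 2 / 3 * lam ⟨μ, hμn⟩ := by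
  classical
  set P : Fin n → Prop := fun i => (i : ℕ) < μ with hP
  have hnum : g ⬝ᵥ (Matrix.diagonal lam).mulVec g = ∑ i, lam i * g i ^ 2 := by
    simp only [dotProduct, Matrix.mulVec_diagonal]
    apply Finset.sum_congr rfl; intro i _; ring
  have hden : g ⬝ᵥ g = ∑ i, g i ^ 2 := by
    simp [dotProduct]
    ring_nf
  set S₁ := ∑ i ∈ Finset.univ.filter P, g i ^ 2 with hS₁
  set S₂ := ∑ i ∈ Finset.univ.filter (fun i => ¬ P i), g i ^ 2 with hS₂
  have hsplit : ∀ f : Fin n → ℝ, ∑ i, f i =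
      ∑ i ∈ Finset.univ.filter P, f i + ∑ i ∈ Finset.univ.filter (fun i => ¬ P i), f i := by
    intro f
    rw [← Finset.sum_filter_add_sum_filter_not Finset.univ P f]
  have hL1 : (1 : ℝ) ≤ lam ⟨μ, hμn⟩ := by
    rw [← h1]; exact hmono (by simp)
  have hlam1 : ∀ i : Fin n, (1 : ℝ) ≤ lam i := by
    intro i; rw [← h1]; exact hmono (Fin.le_def.mpr (Nat.zero_le _))
  set L := lam ⟨μ, hμn⟩ with hLdef
  -- numerator bound
  have hnum_ge : ∑ i, lam i * g i ^ 2 ≥ S₁ + L * S₂ := by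
    rw [hsplit (fun i => lam i * g i ^ 2), hS₁, hS₂, Finset.mul_sum]
    gcongr with i hi i hi
    · nlinarith [hlam1 i, sq_nonneg (g i)]
    · simp only [Finset.mem_filter, hP, not_lt] at hi
      have : L ≤ lam i := hmono hi.2
      nlinarith [sq_nonneg (g i)]
  have hS₁nonneg : 0 ≤ S₁ := Finset.sum_nonneg fun i _ => sq_nonneg _
  have hS₂ge : S₂ ≥ 2 * ε := by
    have hmem : (⟨μ, hμn⟩ : Fin n) ∈ Finset.univ.filter (fun i => ¬ P i) := by
      simp [hP]
    calc S₂ ≥ g ⟨μ, hμn⟩ ^ 2 :=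
          Finset.single_le_sum (f := fun i => g i ^ 2) (fun i _ => sq_nonneg _) hmem
      _ ≥ 2 * ε := hbig
  have hdpos : 0 < S₁ + S₂ := by linarith
  rw [hnum, hden, hsplit (fun i => g i ^ 2), ← hS₁, ← hS₂, ge_iff_le, le_div_iff₀ hdpos]
  nlinarith [hnum_ge, hsum, hS₂ge, hL1, hS₁nonneg]
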